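/- Let ξ be a connected core graph of type (g, n, r) (admissible marking, no marked legs) with n = 3(g−1) + 2(n−r). Then every edge of ξ is marked (so r = |E|), every neutral vertex is trivalent, ξ has no tadpoles, and every neutral vertex is connected to the distinguished vertex by 1, 2, or 3 edges, being adjacent to 2, 1, or 0 legs respectively. Consequently ξ is isomorphic to one of the graphs θ_{g,ℓ}(p) where ℓ = n − r, for some p of parity opposite to g with 0 ≤ p < g and p ≤ n. -/
import Mathlib


/-- A finite graph with a marking, following Payne–Willwacher: a finite nonempty set
of vertices `V`, a finite set of flags (half-edges) `F`, an adjacency map `a`, an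
involution `ι` (whose 2-element orbits are edges and whose fixed points are legs),
together with a distinguished vertex `dv` and a set `marked ⊆ a⁻¹(dv)` of marked
flags. -/
structure MGraph where
  V : Type
  F : Type
  [fintypeV : Fintype V]
  [fintypeF : Fintype F]
  [decV : DecidableEq V]
  [decF : DecidableEq F]
  nonemptyV : Nonempty V
  a : F → V
  ι : F → F
  ι_invol : ∀ f, ι (ι f) = f
  dv : V
  marked : Finset F
  marked_adj : ∀ f ∈ marked, a f = dv

namespace MGraph

attribute [instance] fintypeV fintypeF decV decF

variable (G : MGraph)

/-- The number of legs (fixed flags). -/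
noncomputable def numLegs : ℕ := Fintype.card {f : G.F // G.ι f = f}

/-- The number of edges (2-element orbits of the involution). -/
noncomputable def numEdges : ℕ := Fintype.card {f : G.F // G.ι f ≠ f} / 2

/-- Two vertices are adjacent if some edge joins them. -/
def Adj (v w : G.V) : Prop := ∃ f, G.ι f ≠ f ∧ G.a f = v ∧ G.a (G.ι f) = w

/-- The graph is connected. -/
def Connected : Prop := ∀ v w : G.V, Relation.ReflTransGen G.Adj v w

/-- Admissibility of the marking: stability (neutral vertices have valence ≥ 3),
no neutral tadpoles, and no doubly-marked edges. -/
def Admissible : Prop :=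
  (∀ w : G.V, w ≠ G.dv → 3 ≤ Fintype.card {f : G.F // G.a f = w}) ∧
  (∀ f : G.F, G.ι f ≠ f → G.a f = G.a (G.ι f) → G.a f = G.dv) ∧
  (∀ f ∈ G.marked, G.ι f ∈ G.marked → G.ι f = f)

/-- A core graph has no marked legs. -/
def NoMarkedLegs : Prop := ∀ f ∈ G.marked, G.ι f ≠ f

/-- The graph is of type `(g, n, r)`: first Betti number `g − 1`
(i.e. `|E| − |V| + 1 = g − 1`, written additively), `n` legs and `r` marked flags. -/
def IsType (g n r : ℕ) : Prop :=
  G.numEdges + 2 = Fintype.card G.V + g ∧ G.numLegs = n ∧ G.marked.card = r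

end MGraph

namespace MGraph

variable (G : MGraph)

/-- The number of edges joining a vertex `w` to the distinguished vertex,
counted by flags at `w` whose partner lies at the distinguished vertex. -/
noncomputable def edgesToDV (w : G.V) : ℕ :=
  Fintype.card {f : G.F // G.a f = w ∧ G.ι f ≠ f ∧ G.a (G.ι f) = G.dv}

/-- The number of legs at a vertex `w`. -/
noncomputable def legsAt (w : G.V) : ℕ :=
  Fintype.card {f : G.F // G.a f = w ∧ G.ι f = f}

end MGraph

section AuxLemmas

open Finset

/-- A finset stable under a fixed-point-free involution has even cardinality. -/
lemma aux_even_card_invol {α : Type*} [DecidableEq α] (σ : α → α) :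
    ∀ s : Finset α, (∀ x ∈ s, σ x ∈ s) → (∀ x ∈ s, σ (σ x) = x) → (∀ x ∈ s, σ x ≠ x) →
      Even s.card := by
  intro s
  induction s using Finset.strongInduction with
  | _ s ih =>
    intro hmem hinv hne
    rcases s.eq_empty_or_nonempty with rfl | ⟨x, hx⟩
    · simp
    · have hσx : σ x ∈ s := hmem x hx
      have hσxx : σ x ≠ x := hne x hx
      have hσx' : σ x ∈ s.erase x := Finset.mem_erase.mpr ⟨hσxx, hσx⟩
      have hss : (s.erase x).erase (σ x) ⊂ s :=
        lt_of_le_of_lt (Finset.erase_subset _ _) (Finset.erase_ssubset hx)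
      have hmem' : ∀ y ∈ (s.erase x).erase (σ x), y ∈ s := fun y hy =>
        Finset.mem_of_mem_erase (Finset.mem_of_mem_erase hy)
      have key : Even ((s.erase x).erase (σ x)).card := by
        apply ih _ hss
        · intro y hy
          have hys : y ∈ s := hmem' y hy
          have h1 : y ≠ σ x := (Finset.mem_erase.mp hy).1
          have h2 : y ≠ x := (Finset.mem_erase.mp (Finset.mem_of_mem_erase hy)).1
          refine Finset.mem_erase.mpr ⟨?_, Finset.mem_erase.mpr ⟨?_, hmem y hys⟩⟩
          · intro h; apply h2; rw [← hinv y hys, h, hinv x hx]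
          · intro h; apply h1; rw [← hinv y hys, h]
        · exact fun y hy => hinv y (hmem' y hy)
        · exact fun y hy => hne y (hmem' y hy)
      have hc1 : (s.erase x).card = s.card - 1 := Finset.card_erase_of_mem hx
      have hc2 : ((s.erase x).erase (σ x)).card = (s.erase x).card - 1 :=
        Finset.card_erase_of_mem hσx'
      have hpos : 0 < s.card := Finset.card_pos.mpr ⟨x, hx⟩
      have hpos2 : 0 < (s.erase x).card := Finset.card_pos.mpr ⟨σ x, hσx'⟩
      obtain ⟨k, hk⟩ := key
      exact ⟨k + 1, by omega⟩

/-- Counting a finset partitioned according to a function taking values `1`, `2`, `3`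
(with a companion function taking values `2`, `1`, `0` respectively). -/
lemma aux_count3 {α : Type*} [DecidableEq α] (v l : α → ℕ) :
    ∀ N : Finset α,
      (∀ w ∈ N, (v w = 1 ∧ l w = 2) ∨ (v w = 2 ∧ l w = 1) ∨ (v w = 3 ∧ l w = 0)) →
      (∑ w ∈ N, v w =
          (N.filter (fun w => v w = 1)).card + 2 * (N.filter (fun w => v w = 2)).card
            + 3 * (N.filter (fun w => v w = 3)).card) ∧
      (∑ w ∈ N, l w =
          2 * (N.filter (fun w => v w = 1)).card + (N.filter (fun w => v w = 2)).card) ∧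
      (N.card = (N.filter (fun w => v w = 1)).card + (N.filter (fun w => v w = 2)).card
          + (N.filter (fun w => v w = 3)).card) := by
  intro N
  induction N using Finset.induction with
  | empty => simp
  | @insert a s ha ih =>
    intro h
    obtain ⟨h1, h2, h3⟩ := ih (fun w hw => h w (Finset.mem_insert_of_mem hw))
    have hna1 : a ∉ s.filter (fun w => v w = 1) := fun hm => ha (Finset.mem_of_mem_filter _ hm)
    have hna2 : a ∉ s.filter (fun w => v w = 2) := fun hm => ha (Finset.mem_of_mem_filter _ hm)
    have hna3 : a ∉ s.filter (fun w => v w = 3) := fun hm => ha (Finset.mem_of_mem_filter _ hm)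
    rcases h a (Finset.mem_insert_self a s) with ⟨hv, hl⟩ | ⟨hv, hl⟩ | ⟨hv, hl⟩ <;>
      simp only [Finset.sum_insert ha, Finset.filter_insert, hv, hl,
        Finset.card_insert_of_notMem hna1, Finset.card_insert_of_notMem hna2,
        Finset.card_insert_of_notMem hna3, Finset.card_insert_of_notMem ha,
        if_true, if_false, Nat.one_ne_zero, Finset.card_insert_of_notMem,
        show (1:ℕ) ≠ 2 by omega, show (1:ℕ) ≠ 3 by omega, show (2:ℕ) ≠ 1 by omega,
        show (2:ℕ) ≠ 3 by omega, show (3:ℕ) ≠ 1 by omega, show (3:ℕ) ≠ 2 by omega,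
        if_neg, reduceIte] <;>
      omega

end AuxLemmas
open Classical in
/-- a connected core graph of type `(g, n, r)` attaining the bound
`n = 3(g−1) + 2(n−r)` has every edge marked (so `r = |E|`), every neutral vertex
trivalent, no tadpoles, and every neutral vertex joined to the distinguished vertex
by 1, 2 or 3 edges, carrying 2, 1 or 0 legs respectively.  Consequently the graph is
isomorphic to `θ_{g,ℓ}(p)` (with `ℓ = n − r`), identified by its statistics: for
some `p` of parity opposite to `g` with `0 ≤ p < g` and `p ≤ n`, it has exactly `p`
neutral vertices joined to the distinguished vertex by 2 parallel edges,
`t = (g−1−p)/2` joined by 3 edges, and `y = (n−p)/2` joined by a single edge. -/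
theorem core_graph_extremal_classification (G : MGraph) (g n r : ℕ)
    (hconn : G.Connected) (hadm : G.Admissible) (hcore : G.NoMarkedLegs)
    (htype : G.IsType g n r)
    (hext : (n : ℤ) = 3 * ((g : ℤ) - 1) + 2 * ((n : ℤ) - (r : ℤ))) :
    (∀ f : G.F, G.ι f ≠ f → (f ∈ G.marked ∨ G.ι f ∈ G.marked)) ∧
    r = G.numEdges ∧
    (∀ w : G.V, w ≠ G.dv → Fintype.card {f : G.F // G.a f = w} = 3) ∧
    (∀ f : G.F, G.ι f ≠ f → G.a f ≠ G.a (G.ι f)) ∧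
    (∀ w : G.V, w ≠ G.dv →
      (G.edgesToDV w = 1 ∧ G.legsAt w = 2) ∨
      (G.edgesToDV w = 2 ∧ G.legsAt w = 1) ∨
      (G.edgesToDV w = 3 ∧ G.legsAt w = 0)) ∧
    (∃ p t y : ℕ,
      (p % 2 ≠ g % 2) ∧ p < g ∧ p ≤ n ∧
      p + 2 * t + 1 = g ∧ p + 2 * y = n ∧
      Fintype.card {w : G.V // w ≠ G.dv ∧ G.edgesToDV w = 2} = p ∧
      Fintype.card {w : G.V // w ≠ G.dv ∧ G.edgesToDV w = 3} = t ∧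
      Fintype.card {w : G.V // w ≠ G.dv ∧ G.edgesToDV w = 1} = y) := by
  classical
  obtain ⟨hEuler, hlegs0, hr⟩ := htype
  have hinv : ∀ f, G.ι (G.ι f) = f := G.ι_invol
  have hml : ∀ f ∈ G.marked, G.ι f ≠ f := hcore
  have hmm : ∀ f ∈ G.marked, G.ι f ∉ G.marked := fun f hf hι => hml f hf (hadm.2.2 f hf hι)
  have hιinj : Function.Injective G.ι := Function.LeftInverse.injective hinv
  -- basic finsets
  set nonfix : Finset G.F := Finset.univ.filter (fun f => ¬ G.ι f = f) with hnonfix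
  set legs : Finset G.F := Finset.univ.filter (fun f => G.ι f = f) with hlegsdef
  have hcardF : legs.card + nonfix.card = Fintype.card G.F := by
    rw [hlegsdef, hnonfix, ← Finset.card_univ]
    exact Finset.card_filter_add_card_filter_not _
  have hlegsn : legs.card = n := by
    rw [← hlegs0]
    simp only [MGraph.numLegs, Fintype.card_subtype, hlegsdef]
  have heven : Even nonfix.card := by
    apply aux_even_card_invol G.ι
    · intro x hx
      simp only [hnonfix, Finset.mem_filter, Finset.mem_univ, true_and] at hx ⊢
      rw [hinv x]
      exact fun h => hx h.symm
    · exact fun x _ => hinv x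
    · intro x hx
      simp only [hnonfix, Finset.mem_filter, Finset.mem_univ, true_and] at hx
      exact hx
  set E := G.numEdges with hE
  have hE2 : 2 * E = nonfix.card := by
    have h1 : E = nonfix.card / 2 := by
      rw [hE]
      simp only [MGraph.numEdges, Fintype.card_subtype, ne_eq, hnonfix]
    obtain ⟨k, hk⟩ := heven
    omega
  -- vertices
  set N : Finset G.V := Finset.univ.erase G.dv with hN
  set m := N.card with hm
  have hV : Fintype.card G.V = m + 1 := by
    have h0 : 0 < Fintype.card G.V := Fintype.card_pos_iff.mpr G.nonemptyV
    have h1 : N.card = Fintype.card G.V - 1 := by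
      rw [hN, Finset.card_erase_of_mem (Finset.mem_univ _), Finset.card_univ]
    omega
  -- degrees
  set deg : G.V → ℕ := fun v => (Finset.univ.filter (fun f => G.a f = v)).card with hdeg
  have hdegsum : Fintype.card G.F = ∑ v, deg v := by
    rw [← Finset.card_univ]
    exact Finset.card_eq_sum_card_fiberwise (fun x _ => Finset.mem_univ _)
  have hsum_split : ∑ v, deg v = (∑ w ∈ N, deg w) + deg G.dv := by
    rw [hN]
    exact (Finset.sum_erase_add _ _ (Finset.mem_univ _)).symm
  have hdeg3 : ∀ w ∈ N, 3 ≤ deg w := by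
    intro w hw
    have hwne : w ≠ G.dv := (Finset.mem_erase.mp hw).1
    have h := hadm.1 w hwne
    rwa [Fintype.card_subtype] at h
  have hdegdv : r ≤ deg G.dv := by
    rw [← hr]
    show G.marked.card ≤ (Finset.univ.filter (fun f => G.a f = G.dv)).card
    apply Finset.card_le_card
    intro f hf
    simp only [Finset.mem_filter, Finset.mem_univ, true_and]
    exact G.marked_adj f hf
  have hSlow : 3 * m ≤ ∑ w ∈ N, deg w := by
    calc 3 * m = ∑ _w ∈ N, 3 := by rw [Finset.sum_const, smul_eq_mul, mul_comm, hm]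
    _ ≤ _ := Finset.sum_le_sum hdeg3
  -- marked flags and their partners
  have hmsub : G.marked ⊆ nonfix := by
    intro f hf
    simp only [hnonfix, Finset.mem_filter, Finset.mem_univ, true_and]
    exact hml f hf
  have himsub : G.marked.image G.ι ⊆ nonfix := by
    intro f hf
    obtain ⟨x, hx, rfl⟩ := Finset.mem_image.mp hf
    simp only [hnonfix, Finset.mem_filter, Finset.mem_univ, true_and]
    rw [hinv x]
    exact fun h => hml x hx h.symm
  have hdisj : Disjoint G.marked (G.marked.image G.ι) := by
    rw [Finset.disjoint_left]
    intro f hf hf'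
    obtain ⟨x, hx, hxe⟩ := Finset.mem_image.mp hf'
    subst hxe
    exact hmm x hx hf
  have hunion_sub : G.marked ∪ G.marked.image G.ι ⊆ nonfix :=
    Finset.union_subset hmsub himsub
  have hunion_card : (G.marked ∪ G.marked.image G.ι).card = 2 * r := by
    rw [Finset.card_union_of_disjoint hdisj, Finset.card_image_of_injective _ hιinj, hr]
    ring
  have hrle : 2 * r ≤ nonfix.card := hunion_card ▸ Finset.card_le_card hunion_sub
  have hZ : 2 * (r : ℤ) + 3 = 3 * (g : ℤ) + (n : ℤ) := by linarith
  -- the key equalities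
  have hrE : r = E := by omega
  have hdvr : deg G.dv = r := by omega
  have hS3 : ∑ w ∈ N, deg w = 3 * m := by omega
  -- every flag at dv is marked
  have hmarked_eq : G.marked = Finset.univ.filter (fun f => G.a f = G.dv) := by
    apply Finset.eq_of_subset_of_card_le
    · intro f hf
      simp only [Finset.mem_filter, Finset.mem_univ, true_and]
      exact G.marked_adj f hf
    · have h' : (Finset.univ.filter (fun f => G.a f = G.dv)).card = deg G.dv := rfl
      omega
  have hatdv : ∀ f, G.a f = G.dv → f ∈ G.marked := by
    intro f hf
    rw [hmarked_eq]
    simp only [Finset.mem_filter, Finset.mem_univ, true_and]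
    exact hf
  -- every edge is marked
  have huniv_eq : G.marked ∪ G.marked.image G.ι = nonfix := by
    apply Finset.eq_of_subset_of_card_le hunion_sub
    rw [hunion_card]
    omega
  have goal1 : ∀ f : G.F, G.ι f ≠ f → (f ∈ G.marked ∨ G.ι f ∈ G.marked) := by
    intro f hf
    have hfin : f ∈ G.marked ∪ G.marked.image G.ι := by
      rw [huniv_eq, hnonfix]
      simp only [Finset.mem_filter, Finset.mem_univ, true_and]
      exact hf
    rcases Finset.mem_union.mp hfin with h | h
    · exact Or.inl h
    · obtain ⟨x, hx, hxe⟩ := Finset.mem_image.mp h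
      right
      rw [← hxe, hinv x]
      exact hx
  -- no tadpoles
  have goal4 : ∀ f : G.F, G.ι f ≠ f → G.a f ≠ G.a (G.ι f) := by
    intro f hf heq
    by_cases hfd : G.a f = G.dv
    · exact hmm f (hatdv f hfd) (hatdv _ (heq ▸ hfd))
    · exact hfd (hadm.2.1 f hf heq)
  -- the partner of a non-leg flag at a neutral vertex is at dv
  have hpart : ∀ f : G.F, G.ι f ≠ f → G.a f ≠ G.dv → G.a (G.ι f) = G.dv := by
    intro f hf hfd
    rcases goal1 f hf with h | h
    · exact absurd (G.marked_adj f h) hfd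
    · exact G.marked_adj _ h
  -- expressing edgesToDV and legsAt as filter cards
  have hedges_card : ∀ w, w ≠ G.dv →
      G.edgesToDV w = (Finset.univ.filter (fun f => G.a f = w ∧ ¬ G.ι f = f)).card := by
    intro w hw
    have hseteq : (Finset.univ.filter
          (fun f => G.a f = w ∧ G.ι f ≠ f ∧ G.a (G.ι f) = G.dv))
        = Finset.univ.filter (fun f => G.a f = w ∧ ¬ G.ι f = f) := by
      ext f
      simp only [Finset.mem_filter, Finset.mem_univ, true_and, ne_eq]
      constructor
      · rintro ⟨h1, h2, _⟩; exact ⟨h1, h2⟩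
      · rintro ⟨h1, h2⟩
        exact ⟨h1, h2, hpart f h2 (by rw [h1]; exact hw)⟩
    rw [show G.edgesToDV w
        = Fintype.card {f : G.F // G.a f = w ∧ G.ι f ≠ f ∧ G.a (G.ι f) = G.dv} from rfl,
      Fintype.card_subtype, hseteq]
  have hlegs_card : ∀ w : G.V,
      G.legsAt w = (Finset.univ.filter (fun f => G.a f = w ∧ G.ι f = f)).card := by
    intro w
    rw [show G.legsAt w = Fintype.card {f : G.F // G.a f = w ∧ G.ι f = f} from rfl,
      Fintype.card_subtype]
  -- degree splitting at neutral vertices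
  have hsplit : ∀ w, w ≠ G.dv → G.legsAt w + G.edgesToDV w = deg w := by
    intro w hw
    have h := Finset.card_filter_add_card_filter_not
      (s := Finset.univ.filter (fun f => G.a f = w)) (p := fun f => G.ι f = f)
    rw [Finset.filter_filter, Finset.filter_filter] at h
    rw [hlegs_card w, hedges_card w hw]
    exact h
  -- trivalence
  have hdeg_eq3 : ∀ w ∈ N, deg w = 3 := by
    have hsum3 : ∑ _w ∈ N, (3 : ℕ) = ∑ w ∈ N, deg w := by
      rw [Finset.sum_const, smul_eq_mul, hS3, ← hm]
      ring
    intro w hw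
    exact ((Finset.sum_eq_sum_iff_of_le hdeg3).mp hsum3 w hw).symm
  have goal3 : ∀ w : G.V, w ≠ G.dv → Fintype.card {f : G.F // G.a f = w} = 3 := by
    intro w hw
    rw [Fintype.card_subtype]
    exact hdeg_eq3 w (Finset.mem_erase.mpr ⟨hw, Finset.mem_univ w⟩)
  -- positivity of edgesToDV via connectedness
  have hpos : ∀ w, w ≠ G.dv → 1 ≤ G.edgesToDV w := by
    intro w hw
    rcases (hconn w G.dv).cases_head with heq | ⟨x, hAdj, _⟩
    · exact absurd heq hw
    · obtain ⟨f, hf1, hf2, _⟩ := hAdj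
      have hadv : G.a (G.ι f) = G.dv := hpart f hf1 (by rw [hf2]; exact hw)
      have hlt : 0 < Fintype.card
          {f' : G.F // G.a f' = w ∧ G.ι f' ≠ f' ∧ G.a (G.ι f') = G.dv} :=
        Fintype.card_pos_iff.mpr ⟨⟨f, hf2, hf1, hadv⟩⟩
      exact hlt
  have goal5 : ∀ w : G.V, w ≠ G.dv →
      (G.edgesToDV w = 1 ∧ G.legsAt w = 2) ∨
      (G.edgesToDV w = 2 ∧ G.legsAt w = 1) ∨
      (G.edgesToDV w = 3 ∧ G.legsAt w = 0) := by
    intro w hw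
    have h1 := hsplit w hw
    have h2 := hdeg_eq3 w (Finset.mem_erase.mpr ⟨hw, Finset.mem_univ w⟩)
    have h3 := hpos w hw
    omega
  -- edge count fiberwise
  have hnonfix_sum : nonfix.card = ∑ v, (nonfix.filter (fun f => G.a f = v)).card :=
    Finset.card_eq_sum_card_fiberwise (fun x _ => Finset.mem_univ _)
  have hfiber_dv : nonfix.filter (fun f => G.a f = G.dv) = G.marked := by
    ext f
    rw [hnonfix]
    simp only [Finset.filter_filter, Finset.mem_filter, Finset.mem_univ, true_and]
    constructor
    · rintro ⟨_, h2⟩; exact hatdv f h2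
    · intro hf; exact ⟨hml f hf, G.marked_adj f hf⟩
  have hfiber_w : ∀ w ∈ N, (nonfix.filter (fun f => G.a f = w)).card = G.edgesToDV w := by
    intro w hw
    have hwne : w ≠ G.dv := (Finset.mem_erase.mp hw).1
    rw [hnonfix, Finset.filter_filter, hedges_card w hwne]
    congr 1
    ext f
    simp only [Finset.mem_filter, Finset.mem_univ, true_and]
    tauto
  have hEsum : nonfix.card = (∑ w ∈ N, G.edgesToDV w) + r := by
    rw [hnonfix_sum, ← Finset.sum_erase_add _ _ (Finset.mem_univ G.dv), ← hN]
    congr 1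
    · exact Finset.sum_congr rfl hfiber_w
    · rw [hfiber_dv, hr]
  -- leg count fiberwise
  have hlegs_sum : legs.card = ∑ v, (legs.filter (fun f => G.a f = v)).card :=
    Finset.card_eq_sum_card_fiberwise (fun x _ => Finset.mem_univ _)
  have hlegs_dv : legs.filter (fun f => G.a f = G.dv) = ∅ := by
    ext f
    rw [hlegsdef]
    simp only [Finset.filter_filter, Finset.mem_filter, Finset.mem_univ, true_and,
      Finset.notMem_empty, iff_false, not_and]
    intro h1 h2
    exact hml f (hatdv f h2) h1
  have hlegs_w : ∀ w ∈ N, (legs.filter (fun f => G.a f = w)).card = G.legsAt w := by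
    intro w hw
    rw [hlegsdef, Finset.filter_filter, hlegs_card w]
    congr 1
    ext f
    simp only [Finset.mem_filter, Finset.mem_univ, true_and]
    tauto
  have hnsum : n = ∑ w ∈ N, G.legsAt w := by
    rw [← hlegsn, hlegs_sum, ← Finset.sum_erase_add _ _ (Finset.mem_univ G.dv), ← hN,
      hlegs_dv]
    simp only [Finset.card_empty, add_zero]
    exact Finset.sum_congr rfl hlegs_w
  -- final counting
  have htri : ∀ w ∈ N, (G.edgesToDV w = 1 ∧ G.legsAt w = 2) ∨
      (G.edgesToDV w = 2 ∧ G.legsAt w = 1) ∨ (G.edgesToDV w = 3 ∧ G.legsAt w = 0) :=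
    fun w hw => goal5 w (Finset.mem_erase.mp hw).1
  obtain ⟨hq1, hq2, hq3⟩ := aux_count3 G.edgesToDV G.legsAt N htri
  have hcard_eq : ∀ k : ℕ, Fintype.card {w : G.V // w ≠ G.dv ∧ G.edgesToDV w = k}
      = (N.filter (fun w => G.edgesToDV w = k)).card := by
    intro k
    rw [Fintype.card_subtype]
    congr 1
    ext w
    simp only [Finset.mem_filter, Finset.mem_univ, true_and, hN, Finset.mem_erase]
    tauto
  refine ⟨goal1, hrE, goal3, goal4, goal5,
    (N.filter (fun w => G.edgesToDV w = 2)).card,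
    (N.filter (fun w => G.edgesToDV w = 3)).card,
    (N.filter (fun w => G.edgesToDV w = 1)).card,
    ?_, ?_, ?_, ?_, ?_, hcard_eq 2, hcard_eq 3, hcard_eq 1⟩ <;> omega
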